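/- arXiv:2308.15803 — 2 statements merged into one kernel-verified Lean document; each statement's English description precedes it below -/
import Mathlib

section
/- (Uniform bound on the transformed error.) Consider the system ẋ = f(x) + g(x)u with f, g locally Lipschitz and g(x)g(x)ᵀ positive definite, a funnel (γ_L, γ_U), and the funnel controller û with gain k > 0. Let K ⊂ ℝⁿ be the closure of the set of all points y with γ_{i,L}(t) ≤ y_i ≤ γ_{i,U}(t) for all i for some t ≥ 0, let Φ̄ = sup over y ∈ K, t ≥ 0 and i of |f_i(y) − ½ γ̇_{i,s}(t)| (which is finite), and let d̄ = sup over t ≥ 0 and i of γ_{i,d}(t). Let T > 0 and let x : [0,T] → ℝⁿ be differentiable with ẋ(t) = f(x(t)) + g(x(t))û(x(t),t) and γ_{i,L}(t) < x_i(t) < γ_{i,U}(t) for all t ∈ [0,T] and all i. Then for every i and every t ∈ [0,T], |ε̂_i(x(t),t)| ≤ max(|ε̂_i(x(0),0)|, d̄·Φ̄/(4k)); in particular the transformed error admits a bound independent of T, and the normalized error evolves in a compact subset of (−1,1)ⁿ. -/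
open Matrix Set

/-- Normalized error `ê = (2z − (U + L))/(U − L)`. -/
noncomputable def nerr (L U z : ℝ) : ℝ := (2 * z - (U + L)) / (U - L)

/-- Transformed error `ε̂ = ln((1 + ê)/(1 − ê))`. -/
noncomputable def terr (L U z : ℝ) : ℝ := Real.log ((1 + nerr L U z) / (1 - nerr L U z))

/-- Diagonal gain entry `ξ̂ = 4/((U − L)(1 − ê²))`. -/
noncomputable def xhat (L U z : ℝ) : ℝ := 4 / ((U - L) * (1 - (nerr L U z) ^ 2))

/-- The funnel controller
`û(y,t) = −g(y)ᵀ(g(y)g(y)ᵀ)⁻¹ (k ξ̂(y,t) ε̂(y,t) − ½ γ̇_d(t) ê(y,t))`. -/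
noncomputable def funnelController {n m : ℕ} (k : ℝ)
    (g : (Fin n → ℝ) → Matrix (Fin n) (Fin m) ℝ)
    (γL γU γL' γU' : ℝ → Fin n → ℝ) (y : Fin n → ℝ) (t : ℝ) : Fin m → ℝ :=
  -((g y)ᵀ.mulVec (((g y * (g y)ᵀ)⁻¹).mulVec (fun i =>
      k * xhat (γL t i) (γU t i) (y i) * terr (γL t i) (γU t i) (y i)
        - (1 / 2) * (γU' t i - γL' t i) * nerr (γL t i) (γU t i) (y i))))

lemma nerr_lt_one {L U z : ℝ} (h1 : L < z) (h2 : z < U) : nerr L U z < 1 := by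
  unfold nerr; rw [div_lt_one (by linarith)]; linarith

lemma neg_one_lt_nerr {L U z : ℝ} (h1 : L < z) (h2 : z < U) : -1 < nerr L U z := by
  unfold nerr; rw [lt_div_iff₀ (by linarith)]; linarith

lemma alg_aux (d nv z' l' u' : ℝ) (hd : d ≠ 0) (e1 : 1 + nv ≠ 0) (e2 : 1 - nv ≠ 0) :
    ((2 * z' - (u' + l') - nv * (u' - l')) / d * (1 - nv) -
        (1 + nv) * (-((2 * z' - (u' + l') - nv * (u' - l')) / d))) / (1 - nv) ^ 2 /
        ((1 + nv) / (1 - nv))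
      = 4 / (d * (1 - nv ^ 2)) * (z' - (u' + l') / 2 - nv * (u' - l') / 2) := by
  have h3 : 1 - nv ^ 2 ≠ 0 := by
    intro h
    rcases mul_eq_zero.1 (show (1 - nv) * (1 + nv) = 0 by linear_combination h) with h' | h'
    exacts [e2 h', e1 h']
  field_simp
  ring

lemma terr_hasDerivAt (L U z : ℝ → ℝ) (l' u' z' : ℝ) (s : ℝ)
    (hL : HasDerivAt L l' s) (hU : HasDerivAt U u' s) (hz : HasDerivAt z z' s)
    (h1 : L s < z s) (h2 : z s < U s) :
    HasDerivAt (fun τ => terr (L τ) (U τ) (z τ))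
      (xhat (L s) (U s) (z s) *
        (z' - (u' + l') / 2 - nerr (L s) (U s) (z s) * (u' - l') / 2)) s := by
  have hd : 0 < U s - L s := by linarith
  have hne : U s - L s ≠ 0 := ne_of_gt hd
  have hn1 : nerr (L s) (U s) (z s) < 1 := nerr_lt_one h1 h2
  have hn2 : -1 < nerr (L s) (U s) (z s) := neg_one_lt_nerr h1 h2
  have hnum : HasDerivAt (fun τ => 2 * z τ - (U τ + L τ)) (2 * z' - (u' + l')) s :=
    (hz.const_mul 2).sub (hU.add hL)
  have hden : HasDerivAt (fun τ => U τ - L τ) (u' - l') s := hU.sub hL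
  have hnerr : HasDerivAt (fun τ => nerr (L τ) (U τ) (z τ))
      (((2 * z' - (u' + l')) * (U s - L s) - (2 * z s - (U s + L s)) * (u' - l')) /
        (U s - L s) ^ 2) s := by
    exact hnum.div hden hne
  set nv := nerr (L s) (U s) (z s) with hnv
  set nd := ((2 * z' - (u' + l')) * (U s - L s) - (2 * z s - (U s + L s)) * (u' - l')) /
      (U s - L s) ^ 2 with hndd
  have hq : HasDerivAt (fun τ => (1 + nerr (L τ) (U τ) (z τ)) / (1 - nerr (L τ) (U τ) (z τ)))
      ((nd * (1 - nv) - (1 + nv) * (-nd)) / (1 - nv) ^ 2) s := by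
    exact (((hasDerivAt_const s (1:ℝ)).add hnerr).div
      ((hasDerivAt_const s (1:ℝ)).sub hnerr) (by show (1:ℝ) - nv ≠ 0; linarith)).congr_deriv
      (by simp only [Pi.add_apply, Pi.sub_apply, ← hnv, zero_add, zero_sub, mul_neg, sub_neg_eq_add])
  have hqpos : 0 < (1 + nv) / (1 - nv) := div_pos (by linarith) (by linarith)
  have hlog := hq.log (ne_of_gt hqpos)
  have hzv : 2 * z s - (U s + L s) = nv * (U s - L s) := by
    rw [hnv]; unfold nerr; field_simp
  have hnd2 : nd = (2 * z' - (u' + l') - nv * (u' - l')) / (U s - L s) := by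
    rw [hndd, hzv]; field_simp
  have heq : (nd * (1 - nv) - (1 + nv) * -nd) / (1 - nv) ^ 2 / ((1 + nv) / (1 - nv))
      = xhat (L s) (U s) (z s) * (z' - (u' + l') / 2 - nv * (u' - l') / 2) := by
    rw [hnd2, xhat, ← hnv]
    exact alg_aux _ _ _ _ _ hne (by linarith) (by linarith)
  exact heq ▸ hlog

lemma key_ineq (d Φ k eV xh fv : ℝ) (hk : 0 < k) (hd : 0 < d) (hfv : |fv| ≤ Φ)
    (hxh : 4 / d ≤ xh) (hxhpos : 0 < xh) (he : d * Φ / (4 * k) < |eV|) :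
    eV * (xh * fv - k * xh ^ 2 * eV) ≤ 0 := by
  have hΦ0 : 0 ≤ Φ := le_trans (abs_nonneg _) hfv
  have hB0 : 0 ≤ d * Φ / (4 * k) := by positivity
  have heV : 0 < |eV| := lt_of_le_of_lt hB0 he
  have h1 : eV * fv ≤ |eV| * Φ := by
    calc eV * fv ≤ |eV * fv| := le_abs_self _
    _ = |eV| * |fv| := abs_mul _ _
    _ ≤ |eV| * Φ := mul_le_mul_of_nonneg_left hfv (abs_nonneg _)
  have h2 : Φ * |eV| ≤ k * (4 / d) * eV ^ 2 := by
    have he2 : d * Φ / (4 * k) * |eV| ≤ |eV| * |eV| :=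
      mul_le_mul he.le le_rfl (abs_nonneg _) (abs_nonneg _)
    have hsq : |eV| * |eV| = eV ^ 2 := by rw [← sq_abs]; ring
    rw [hsq] at he2
    have h4k : (0:ℝ) < 4 * k := by linarith
    have := mul_le_mul_of_nonneg_left he2 (le_of_lt (show (0:ℝ) < 4 * k / d by positivity))
    calc Φ * |eV| = 4 * k / d * (d * Φ / (4 * k) * |eV|) := by
          field_simp
    _ ≤ 4 * k / d * eV ^ 2 := this
    _ = k * (4 / d) * eV ^ 2 := by ring
  nlinarith [mul_le_mul_of_nonneg_left h1 hxhpos.le,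
    mul_le_mul_of_nonneg_left h2 hxhpos.le,
    mul_le_mul_of_nonneg_left hxh (mul_nonneg (mul_nonneg hk.le (sq_nonneg eV)) hxhpos.le)]

lemma mulVec_funnelController {n m : ℕ} (k : ℝ)
    (g : (Fin n → ℝ) → Matrix (Fin n) (Fin m) ℝ) (γL γU γL' γU' : ℝ → Fin n → ℝ)
    (y : Fin n → ℝ) (t : ℝ) (hpd : (g y * (g y)ᵀ).PosDef) :
    (g y).mulVec (funnelController k g γL γU γL' γU' y t) =
      fun i => -(k * xhat (γL t i) (γU t i) (y i) * terr (γL t i) (γU t i) (y i)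
        - (1 / 2) * (γU' t i - γL' t i) * nerr (γL t i) (γU t i) (y i)) := by
  have hdet : IsUnit (g y * (g y)ᵀ).det := isUnit_iff_ne_zero.2 (ne_of_gt hpd.det_pos)
  funext j
  simp only [funnelController, Matrix.mulVec_neg, Matrix.mulVec_mulVec,
    ← Matrix.mul_assoc, Matrix.mul_nonsing_inv _ hdet, Matrix.one_mulVec, Pi.neg_apply]

/-- Uniform bound on the transformed error: along any closed-loop solution remaining inside
the funnel on `[0, T]`, `|ε̂ᵢ(x(t),t)| ≤ max (|ε̂ᵢ(x(0),0)|) (d̄·Φ̄/(4k))`, a bound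
independent of `T`. -/
theorem transformed_error_uniform_bound {n m : ℕ}
    (f : (Fin n → ℝ) → (Fin n → ℝ))
    (g : (Fin n → ℝ) → Matrix (Fin n) (Fin m) ℝ)
    (hf : LocallyLipschitz f)
    (hg : LocallyLipschitz (fun y => fun i j => g y i j))
    (hpd : ∀ y, (g y * (g y)ᵀ).PosDef)
    (γL γU γL' γU' : ℝ → Fin n → ℝ)
    (hγL : ∀ t ∈ Ici (0 : ℝ), HasDerivAt γL (γL' t) t)
    (hγU : ∀ t ∈ Ici (0 : ℝ), HasDerivAt γU (γU' t) t)
    (hγL'c : ContinuousOn γL' (Ici 0)) (hγU'c : ContinuousOn γU' (Ici 0))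
    (hbdd : ∃ C : ℝ, ∀ t ∈ Ici (0 : ℝ),
      ‖γL t‖ ≤ C ∧ ‖γU t‖ ≤ C ∧ ‖γL' t‖ ≤ C ∧ ‖γU' t‖ ≤ C)
    (hgap : ∃ δ > (0 : ℝ), ∀ t ∈ Ici (0 : ℝ), ∀ i, δ ≤ γU t i - γL t i)
    (k : ℝ) (hk : 0 < k)
    (K : Set (Fin n → ℝ))
    (hK : K = closure {y : Fin n → ℝ | ∃ t ∈ Ici (0 : ℝ), ∀ i, γL t i ≤ y i ∧ y i ≤ γU t i})
    (Φbar dbar : ℝ)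
    (hΦbar : Φbar = sSup {r : ℝ | ∃ y ∈ K, ∃ t ∈ Ici (0 : ℝ), ∃ i,
      r = |f y i - (1 / 2) * (γU' t i + γL' t i)|})
    (hdbar : dbar = sSup {r : ℝ | ∃ t ∈ Ici (0 : ℝ), ∃ i, r = γU t i - γL t i})
    (T : ℝ) (hT : 0 < T)
    (x : ℝ → Fin n → ℝ)
    (hode : ∀ t ∈ Icc (0 : ℝ) T,
      HasDerivAt x
        (f (x t) + (g (x t)).mulVec (funnelController k g γL γU γL' γU' (x t) t)) t)
    (hin : ∀ t ∈ Icc (0 : ℝ) T, ∀ i, γL t i < x t i ∧ x t i < γU t i) :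
    ∀ i, ∀ t ∈ Icc (0 : ℝ) T,
      |terr (γL t i) (γU t i) (x t i)| ≤
        max (|terr (γL 0 i) (γU 0 i) (x 0 i)|) (dbar * Φbar / (4 * k)) := by
  obtain ⟨C, hC⟩ := hbdd
  obtain ⟨δ, hδpos, hgap⟩ := hgap
  intro i t ht
  have hxK : ∀ s ∈ Icc (0:ℝ) T, x s ∈ K := by
    intro s hs
    rw [hK]
    exact subset_closure ⟨s, hs.1, fun j => ⟨(hin s hs j).1.le, (hin s hs j).2.le⟩⟩
  have hC0 : (0:ℝ) ≤ C := le_trans (norm_nonneg _) (hC 0 Set.self_mem_Ici).1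
  have hKsub : K ⊆ Metric.closedBall 0 C := by
    rw [hK]
    refine closure_minimal ?_ Metric.isClosed_closedBall
    rintro y ⟨s, hs, hy⟩
    rw [Metric.mem_closedBall, dist_zero_right, pi_norm_le_iff_of_nonneg hC0]
    intro j
    have hL : |γL s j| ≤ C := le_trans (norm_le_pi_norm (γL s) j) (hC s hs).1
    have hU : |γU s j| ≤ C := le_trans (norm_le_pi_norm (γU s) j) (hC s hs).2.1
    rw [Real.norm_eq_abs, abs_le]
    exact ⟨le_trans (abs_le.1 hL).1 (hy j).1, le_trans (hy j).2 (abs_le.1 hU).2⟩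
  have hKcomp : IsCompact K := by
    have hcl : IsClosed K := hK ▸ isClosed_closure
    exact Metric.isCompact_of_isClosed_isBounded hcl
      ((Metric.isBounded_closedBall (x := (0 : Fin n → ℝ)) (r := C)).subset hKsub)
  obtain ⟨Cf, hCf⟩ := hKcomp.exists_bound_of_continuousOn hf.continuous.continuousOn
  have hΦbdd : BddAbove {r : ℝ | ∃ y ∈ K, ∃ t ∈ Ici (0:ℝ), ∃ i,
      r = |f y i - (1 / 2) * (γU' t i + γL' t i)|} := by
    refine ⟨Cf + C, ?_⟩
    rintro r ⟨y, hy, s, hs, j, rfl⟩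
    have h1 : |f y j| ≤ Cf := le_trans (norm_le_pi_norm (f y) j) (hCf y hy)
    have h2 : |γU' s j| ≤ C := le_trans (norm_le_pi_norm (γU' s) j) (hC s hs).2.2.2
    have h3 : |γL' s j| ≤ C := le_trans (norm_le_pi_norm (γL' s) j) (hC s hs).2.2.1
    have h4 : |f y j - 1 / 2 * (γU' s j + γL' s j)| ≤ |f y j| + |1 / 2 * (γU' s j + γL' s j)| :=
      abs_sub _ _
    have h5 : |1 / 2 * (γU' s j + γL' s j)| ≤ 1 / 2 * (|γU' s j| + |γL' s j|) := by
      rw [abs_mul]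
      have := abs_add_le (γU' s j) (γL' s j)
      have h6 : |(1:ℝ)/2| = 1/2 := by norm_num
      rw [h6]
      linarith
    linarith
  have hΦle : ∀ s ∈ Icc (0:ℝ) T, |f (x s) i - 1 / 2 * (γU' s i + γL' s i)| ≤ Φbar := by
    intro s hs
    rw [hΦbar]
    exact le_csSup hΦbdd ⟨x s, hxK s hs, s, hs.1, i, rfl⟩
  have hΦ0 : 0 ≤ Φbar := le_trans (abs_nonneg _) (hΦle 0 ⟨le_rfl, hT.le⟩)
  have hdbdd : BddAbove {r : ℝ | ∃ t ∈ Ici (0:ℝ), ∃ i, r = γU t i - γL t i} := by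
    refine ⟨2 * C, ?_⟩
    rintro r ⟨s, hs, j, rfl⟩
    have h2 : |γU s j| ≤ C := le_trans (norm_le_pi_norm (γU s) j) (hC s hs).2.1
    have h3 : |γL s j| ≤ C := le_trans (norm_le_pi_norm (γL s) j) (hC s hs).1
    have := abs_le.1 h2; have := abs_le.1 h3
    linarith [(abs_le.1 h2).2, (abs_le.1 h3).1]
  have hdle : ∀ s ∈ Icc (0:ℝ) T, γU s i - γL s i ≤ dbar := by
    intro s hs
    rw [hdbar]
    exact le_csSup hdbdd ⟨s, hs.1, i, rfl⟩
  have hdpos : 0 < dbar :=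
    lt_of_lt_of_le hδpos (le_trans (hgap 0 Set.self_mem_Ici i) (hdle 0 ⟨le_rfl, hT.le⟩))
  set E : ℝ → ℝ := fun s => terr (γL s i) (γU s i) (x s i) with hE
  set X : ℝ → ℝ := fun s => xhat (γL s i) (γU s i) (x s i) with hX
  set D : ℝ → ℝ := fun s =>
    X s * (f (x s) i - 1 / 2 * (γU' s i + γL' s i)) - k * X s ^ 2 * E s with hD
  have hED : ∀ s ∈ Icc (0:ℝ) T, HasDerivAt E (D s) s := by
    intro s hs
    have hLs : HasDerivAt (fun τ => γL τ i) (γL' s i) s := hasDerivAt_pi.1 (hγL s hs.1) i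
    have hUs : HasDerivAt (fun τ => γU τ i) (γU' s i) s := hasDerivAt_pi.1 (hγU s hs.1) i
    have hxs : HasDerivAt (fun τ => x τ i)
        (f (x s) i - (k * X s * E s
          - 1 / 2 * (γU' s i - γL' s i) * nerr (γL s i) (γU s i) (x s i))) s := by
      have h0 := hasDerivAt_pi.1 (hode s hs) i
      have h1 : (f (x s) + (g (x s)).mulVec (funnelController k g γL γU γL' γU' (x s) s)) i
          = f (x s) i - (k * X s * E s
            - 1 / 2 * (γU' s i - γL' s i) * nerr (γL s i) (γU s i) (x s i)) := by
        rw [Pi.add_apply, mulVec_funnelController k g γL γU γL' γU' (x s) s (hpd (x s))]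
        simp only [hX, hE]
        ring
      rwa [h1] at h0
    have h2 := terr_hasDerivAt (fun τ => γL τ i) (fun τ => γU τ i) (fun τ => x τ i)
      (γL' s i) (γU' s i) _ s hLs hUs hxs (hin s hs i).1 (hin s hs i).2
    have h3 : xhat (γL s i) (γU s i) (x s i) *
        ((f (x s) i - (k * X s * E s
            - 1 / 2 * (γU' s i - γL' s i) * nerr (γL s i) (γU s i) (x s i)))
          - (γU' s i + γL' s i) / 2
          - nerr (γL s i) (γU s i) (x s i) * (γU' s i - γL' s i) / 2) = D s := by
      simp only [hD, hX, hE]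
      ring
    rw [← h3]
    exact h2
  have hEcont : ContinuousOn E (Icc 0 T) :=
    fun s hs => ((hED s hs).continuousAt).continuousWithinAt
  set B := dbar * Φbar / (4 * k) with hB
  have hB0 : 0 ≤ B := div_nonneg (mul_nonneg hdpos.le hΦ0) (by linarith)
  set M := max |E 0| B with hM
  have hM0 : 0 ≤ M := le_trans (abs_nonneg _) (le_max_left _ _)
  have hXpos : ∀ s ∈ Icc (0:ℝ) T, 0 < X s ∧ 4 / dbar ≤ X s := by
    intro s hs
    have h1 := (hin s hs i).1
    have h2 := (hin s hs i).2
    have hn1 : nerr (γL s i) (γU s i) (x s i) < 1 := nerr_lt_one h1 h2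
    have hn2 : -1 < nerr (γL s i) (γU s i) (x s i) := neg_one_lt_nerr h1 h2
    have hdd : 0 < γU s i - γL s i := by linarith
    have hsq : 0 < 1 - nerr (γL s i) (γU s i) (x s i) ^ 2 := by nlinarith
    have hprod : 0 < (γU s i - γL s i) * (1 - nerr (γL s i) (γU s i) (x s i) ^ 2) :=
      mul_pos hdd hsq
    have hXval : X s = 4 / ((γU s i - γL s i) * (1 - nerr (γL s i) (γU s i) (x s i) ^ 2)) := rfl
    constructor
    · rw [hXval]; positivity
    · rw [hXval]
      apply div_le_div_of_nonneg_left (by norm_num) hprod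
      have hle : (γU s i - γL s i) * (1 - nerr (γL s i) (γU s i) (x s i) ^ 2)
          ≤ γU s i - γL s i := by nlinarith [sq_nonneg (nerr (γL s i) (γU s i) (x s i))]
      exact le_trans hle (hdle s hs)
  show |E t| ≤ M
  suffices hsq : E t ^ 2 ≤ M ^ 2 by
    have h := Real.sqrt_le_sqrt hsq
    rwa [Real.sqrt_sq_eq_abs, Real.sqrt_sq hM0] at h
  by_contra hcon
  push_neg at hcon
  set S : Set ℝ := {s | s ∈ Icc (0:ℝ) t ∧ E s ^ 2 ≤ M ^ 2} with hS
  have hSne : S.Nonempty := by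
    refine ⟨0, ⟨le_rfl, ht.1⟩, ?_⟩
    calc E 0 ^ 2 = |E 0| ^ 2 := (sq_abs _).symm
    _ ≤ M ^ 2 := pow_le_pow_left₀ (abs_nonneg _) (le_max_left _ _) 2
  have hSbdd : BddAbove S := ⟨t, fun s hs => hs.1.2⟩
  have hsubT : Icc (0:ℝ) t ⊆ Icc (0:ℝ) T := Icc_subset_Icc le_rfl ht.2
  have hSclosed : IsClosed S := by
    have hc : ContinuousOn (fun s => E s ^ 2) (Icc (0:ℝ) t) := (hEcont.mono hsubT).pow 2
    exact hc.preimage_isClosed_of_isClosed isClosed_Icc isClosed_Iic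
  set s₁ := sSup S with hs₁
  have hs₁S : s₁ ∈ S := hSclosed.csSup_mem hSne hSbdd
  have hs₁t : s₁ ≤ t := csSup_le hSne fun s hs => hs.1.2
  have hs₁lt : s₁ < t := by
    rcases lt_or_eq_of_le hs₁t with h | h
    · exact h
    · exact absurd (h ▸ hs₁S.2) (not_le.2 hcon)
  have habove : ∀ s, s₁ < s → s ≤ t → M ^ 2 < E s ^ 2 := by
    intro s h1 h2
    by_contra h
    push_neg at h
    have hsS : s ∈ S := ⟨⟨le_trans hs₁S.1.1 h1.le, h2⟩, h⟩
    exact absurd (le_csSup hSbdd hsS) (not_le.2 h1)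
  have hanti : AntitoneOn (fun s => E s ^ 2) (Icc s₁ t) := by
    have hsub2 : Icc s₁ t ⊆ Icc (0:ℝ) T := Icc_subset_Icc hs₁S.1.1 ht.2
    apply antitoneOn_of_deriv_nonpos (convex_Icc s₁ t) ((hEcont.mono hsub2).pow 2)
    · intro s hs
      rw [interior_Icc] at hs
      exact (((hED s (hsub2 ⟨hs.1.le, hs.2.le⟩)).pow 2).differentiableAt).differentiableWithinAt
    · intro s hs
      rw [interior_Icc] at hs
      have hsIcc : s ∈ Icc (0:ℝ) T := hsub2 ⟨hs.1.le, hs.2.le⟩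
      have hdv : HasDerivAt (fun s => E s ^ 2) (2 * E s ^ 1 * D s) s := by
        exact ((hED s hsIcc).pow 2).congr_deriv (by norm_num)
      show deriv (fun s => E s ^ 2) s ≤ 0
      rw [hdv.deriv]
      have hMsq : M ^ 2 < E s ^ 2 := habove s hs.1 hs.2.le
      have hBE : B < |E s| := by
        have hb1 : B ^ 2 ≤ M ^ 2 := pow_le_pow_left₀ hB0 (le_max_right _ _) 2
        have hb2 : B ^ 2 < |E s| ^ 2 := by rw [sq_abs]; linarith
        exact lt_of_pow_lt_pow_left₀ 2 (abs_nonneg _) hb2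
      have hki := key_ineq dbar Φbar k (E s) (X s)
        (f (x s) i - 1 / 2 * (γU' s i + γL' s i)) hk hdpos (hΦle s hsIcc)
        (hXpos s hsIcc).2 (hXpos s hsIcc).1 hBE
      have hDs : E s * D s ≤ 0 := by
        have : D s = X s * (f (x s) i - 1 / 2 * (γU' s i + γL' s i)) - k * X s ^ 2 * E s := rfl
        rw [this]
        calc E s * (X s * (f (x s) i - 1 / 2 * (γU' s i + γL' s i)) - k * X s ^ 2 * E s)
            = E s * (X s * (f (x s) i - 1 / 2 * (γU' s i + γL' s i)) - k * X s ^ 2 * E s) := rfl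
        _ ≤ 0 := by
            have h := hki
            nlinarith [h]
      simp only [pow_one]
      nlinarith [hDs]
  have hfin := hanti (left_mem_Icc.2 hs₁t) (right_mem_Icc.2 hs₁t) hs₁t
  exact absurd (le_trans hfin hs₁S.2) (not_le.2 hcon)
end

section
/- (Theorem 1: controller for reachability.) Consider the system ẋ = f(x) + g(x)u with f, g locally Lipschitz and g(x)g(x)ᵀ positive definite, and the reachability funnel (ρ_L, ρ_U) built from η, c̲_i, c̄_i, l_i > 0, ρ_{i,∞} ∈ (0,1). With the funnel controller û (gain k > 0) built from this funnel, every admissible closed-loop solution x : [0,∞) → ℝⁿ satisfies: (i) ρ_{i,L}(t) < x_i(t) < ρ_{i,U}(t) and X̲_i < x_i(t) < X̄_i for all t ≥ 0 and all i; and (ii) if a target set T ⊆ ℝⁿ contains the rectangle ∏_{i=1}^{n}[η_i − c̲_i ρ'_i, η_i + c̄_i ρ'_i] for some ρ'_i > ρ_{i,∞}, then there exists a finite time t* ≥ 0 with x(t*) ∈ T. -/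
open Matrix Set

/-- Reachability funnel function `ρᵢ(t) = (1 − ρ_{i,∞})·e^{−lᵢt} + ρ_{i,∞}`. -/
noncomputable def rhoFun (ρinf l t : ℝ) : ℝ := (1 - ρinf) * Real.exp (-l * t) + ρinf

/-- Lower reachability funnel boundary `ρ_{i,L}(t) = ηᵢ − c̲ᵢ ρᵢ(t)` with `c̲ᵢ = ηᵢ − X̲ᵢ`. -/
noncomputable def rhoL {n : ℕ} (η Xlow l ρinf : Fin n → ℝ) : ℝ → Fin n → ℝ :=
  fun t i => η i - (η i - Xlow i) * rhoFun (ρinf i) (l i) t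

/-- Upper reachability funnel boundary `ρ_{i,U}(t) = ηᵢ + c̄ᵢ ρᵢ(t)` with `c̄ᵢ = X̄ᵢ − ηᵢ`. -/
noncomputable def rhoU {n : ℕ} (η Xhigh l ρinf : Fin n → ℝ) : ℝ → Fin n → ℝ :=
  fun t i => η i + (Xhigh i - η i) * rhoFun (ρinf i) (l i) t

/-- Time derivative of the lower reachability funnel boundary. -/
noncomputable def rhoL' {n : ℕ} (η Xlow l ρinf : Fin n → ℝ) : ℝ → Fin n → ℝ :=
  fun t i => (η i - Xlow i) * (l i * ((1 - ρinf i) * Real.exp (-(l i) * t)))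

/-- Time derivative of the upper reachability funnel boundary. -/
noncomputable def rhoU' {n : ℕ} (η Xhigh l ρinf : Fin n → ℝ) : ℝ → Fin n → ℝ :=
  fun t i => -((Xhigh i - η i) * (l i * ((1 - ρinf i) * Real.exp (-(l i) * t))))


open Filter Topology
lemma exists_gt_left_of_deriv_neg {h : ℝ → ℝ} {t0 v a : ℝ}
    (hd : HasDerivAt h v t0) (hv : v < 0) (ha : a < t0) :
    ∃ s ∈ Ioo a t0, h t0 < h s := by
  have hs := hasDerivAt_iff_tendsto_slope.mp hd
  have hs' : Tendsto (slope h t0) (𝓝[<] t0) (𝓝 v) :=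
    hs.mono_left (nhdsWithin_mono _ fun x hx => ne_of_lt hx)
  have h1 : ∀ᶠ s in 𝓝[<] t0, slope h t0 s < 0 := hs'.eventually_lt_const hv
  have h2 : ∀ᶠ s in 𝓝[<] t0, s ∈ Ioo a t0 :=
    eventually_of_mem (Ioo_mem_nhdsLT_of_mem ⟨ha, le_refl t0⟩) fun x hx => hx
  obtain ⟨s, hsl, hsm⟩ := (h1.and h2).exists
  refine ⟨s, hsm, ?_⟩
  have hst : s - t0 < 0 := sub_neg.mpr hsm.2
  have hq : (h s - h t0) / (s - t0) < 0 := by simpa [slope_def_field] using hsl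
  rcases div_neg_iff.mp hq with ⟨hp, hq'⟩ | ⟨hp, hq'⟩
  · linarith
  · linarith

lemma barrier_lemma {a b R : ℝ} {h : ℝ → ℝ}
    (hc : ContinuousOn h (Icc a b)) (hRa : h a < R) (hmem : a ≤ b)
    (hd : ∀ t ∈ Icc a b, R ≤ h t → ∃ v, HasDerivAt h v t ∧ v < 0) :
    ∀ t ∈ Icc a b, h t < R := by
  by_contra hcon
  push_neg at hcon
  obtain ⟨t1, ht1, hRt1⟩ := hcon
  set Cs : Set ℝ := Icc a b ∩ h ⁻¹' (Ici R) with hCs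
  have hclosed : IsClosed Cs := hc.preimage_isClosed_of_isClosed isClosed_Icc isClosed_Ici
  have hne : Cs.Nonempty := ⟨t1, ht1, hRt1⟩
  have hbdd : BddBelow Cs := ⟨a, fun x hx => hx.1.1⟩
  have ht0 : sInf Cs ∈ Cs := hclosed.csInf_mem hne hbdd
  set t0 := sInf Cs
  have hat0 : a < t0 := by
    rcases lt_or_eq_of_le ht0.1.1 with h' | h'
    · exact h'
    · exact absurd (h' ▸ ht0.2) (not_le.mpr hRa)
  obtain ⟨v, hv, hvneg⟩ := hd t0 ht0.1 ht0.2
  obtain ⟨s, hsm, hss⟩ := exists_gt_left_of_deriv_neg hv hvneg hat0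
  have hsC : s ∈ Cs := ⟨⟨hsm.1.le, le_trans hsm.2.le ht0.1.2⟩, le_trans ht0.2 hss.le⟩
  exact absurd (csInf_le hbdd hsC) (not_le.mpr hsm.2)

lemma nonneg_at_right_endpoint {a b : ℝ} (hab : a < b) {f : ℝ → ℝ}
    (hf : ContinuousOn f (Icc a b)) (h : ∀ t ∈ Ico a b, 0 ≤ f t) : 0 ≤ f b := by
  have tends : Tendsto f (𝓝[Ico a b] b) (𝓝 (f b)) :=
    (hf b ⟨hab.le, le_refl b⟩).mono_left (nhdsWithin_mono _ Ico_subset_Icc_self)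
  have : (𝓝[Ico a b] b).NeBot := right_nhdsWithin_Ico_neBot hab
  exact ge_of_tendsto tends (eventually_nhdsWithin_of_forall h)
lemma nerr_mem_Ioo {L U z : ℝ} (h1 : L < z) (h2 : z < U) : -1 < nerr L U z ∧ nerr L U z < 1 := by
  have hd : (0:ℝ) < U - L := by linarith
  unfold nerr
  constructor
  · rw [lt_div_iff₀ hd]; linarith
  · rw [div_lt_one hd]; linarith

lemma lower_identity {L U z : ℝ} (h : U - L ≠ 0) :
    z - L = (1 + nerr L U z) * (U - L) / 2 := by
  unfold nerr; field_simp; ring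

lemma upper_identity {L U z : ℝ} (h : U - L ≠ 0) :
    U - z = (1 - nerr L U z) * (U - L) / 2 := by
  unfold nerr; field_simp; ring

lemma eps_sq_hasDerivAt {Lf Uf xf : ℝ → ℝ} {t L' U' x' : ℝ}
    (hL : HasDerivAt Lf L' t) (hU : HasDerivAt Uf U' t) (hx : HasDerivAt xf x' t)
    (h1 : Lf t < xf t) (h2 : xf t < Uf t) :
    HasDerivAt (fun s => terr (Lf s) (Uf s) (xf s) ^ 2)
      (2 * terr (Lf t) (Uf t) (xf t) *
        (xhat (Lf t) (Uf t) (xf t) / 2 *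
          (2 * x' - (U' + L') - nerr (Lf t) (Uf t) (xf t) * (U' - L')))) t := by
  have hd : (0:ℝ) < Uf t - Lf t := by linarith
  obtain ⟨hEl, hEu⟩ := nerr_mem_Ioo h1 h2
  have hN : HasDerivAt (fun s => 2 * xf s - (Uf s + Lf s)) (2 * x' - (U' + L')) t :=
    (hx.const_mul 2).sub (hU.add hL)
  have hD : HasDerivAt (fun s => Uf s - Lf s) (U' - L') t := hU.sub hL
  have hE : HasDerivAt (fun s => nerr (Lf s) (Uf s) (xf s))
      (((2 * x' - (U' + L')) * (Uf t - Lf t) -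
        (2 * xf t - (Uf t + Lf t)) * (U' - L')) / (Uf t - Lf t) ^ 2) t := by
    unfold nerr; exact hN.div hD hd.ne'
  set vE := ((2 * x' - (U' + L')) * (Uf t - Lf t) -
        (2 * xf t - (Uf t + Lf t)) * (U' - L')) / (Uf t - Lf t) ^ 2 with hvE
  have hnum : HasDerivAt (fun s => 1 + nerr (Lf s) (Uf s) (xf s)) vE t := hE.const_add 1
  have hden : HasDerivAt (fun s => 1 - nerr (Lf s) (Uf s) (xf s)) (-vE) t := hE.const_sub 1
  have hdenne : 1 - nerr (Lf t) (Uf t) (xf t) ≠ 0 := by linarith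
  have hQ : HasDerivAt (fun s => (1 + nerr (Lf s) (Uf s) (xf s)) / (1 - nerr (Lf s) (Uf s) (xf s)))
      ((vE * (1 - nerr (Lf t) (Uf t) (xf t)) - (1 + nerr (Lf t) (Uf t) (xf t)) * (-vE)) /
        (1 - nerr (Lf t) (Uf t) (xf t)) ^ 2) t := hnum.div hden hdenne
  have hQpos : 0 < (1 + nerr (Lf t) (Uf t) (xf t)) / (1 - nerr (Lf t) (Uf t) (xf t)) :=
    div_pos (by linarith) (by linarith)
  have hlog : HasDerivAt (fun s => terr (Lf s) (Uf s) (xf s))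
      (((vE * (1 - nerr (Lf t) (Uf t) (xf t)) - (1 + nerr (Lf t) (Uf t) (xf t)) * (-vE)) /
        (1 - nerr (Lf t) (Uf t) (xf t)) ^ 2) /
        ((1 + nerr (Lf t) (Uf t) (xf t)) / (1 - nerr (Lf t) (Uf t) (xf t)))) t := by
    simpa [terr] using hQ.log hQpos.ne'
  have hsq := hlog.pow 2
  refine hsq.congr_deriv ?_
  have hsqE : nerr (Lf t) (Uf t) (xf t) ^ 2 < 1 := by nlinarith
  have hXne : (1:ℝ) - nerr (Lf t) (Uf t) (xf t) ^ 2 ≠ 0 := by nlinarith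
  have hpE : (1:ℝ) + nerr (Lf t) (Uf t) (xf t) ≠ 0 := by linarith
  have hq : 2 * xf t - (Uf t + Lf t) = nerr (Lf t) (Uf t) (xf t) * (Uf t - Lf t) := by
    unfold nerr; rw [div_mul_cancel₀ _ hd.ne']
  rw [hvE, hq]
  unfold xhat
  field_simp
  ring

lemma terr_continuousOn {S : Set ℝ} {Lf Uf xf : ℝ → ℝ}
    (hL : ContinuousOn Lf S) (hU : ContinuousOn Uf S) (hx : ContinuousOn xf S)
    (h : ∀ s ∈ S, Lf s < xf s ∧ xf s < Uf s) :
    ContinuousOn (fun s => terr (Lf s) (Uf s) (xf s)) S := by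
  have hE : ContinuousOn (fun s => nerr (Lf s) (Uf s) (xf s)) S := by
    unfold nerr
    apply ContinuousOn.div (((continuousOn_const (c := (2:ℝ))).mul hx).sub (hU.add hL)) (hU.sub hL)
    intro s hs
    have h2 := h s hs
    intro hc; rw [Pi.sub_apply, sub_eq_zero] at hc; exact absurd (hc ▸ (h2.1.trans h2.2)) (lt_irrefl _)
  unfold terr
  apply ContinuousOn.log
  · apply ContinuousOn.div ((continuousOn_const (c := (1:ℝ))).add hE)
      ((continuousOn_const (c := (1:ℝ))).sub hE)
    intro s hs
    obtain ⟨hEl, hEu⟩ := nerr_mem_Ioo (h s hs).1 (h s hs).2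
    intro hc; simp only [Pi.sub_apply] at hc; nlinarith
  · intro s hs
    obtain ⟨hEl, hEu⟩ := nerr_mem_Ioo (h s hs).1 (h s hs).2
    exact ne_of_gt (div_pos (by linarith) (by linarith))
-- basic facts about rhoFun
lemma rhoFun_gt {ρi li : ℝ} (hρ : ρi ∈ Ioo (0:ℝ) 1) (t : ℝ) :
    ρi < rhoFun ρi li t := by
  have := Real.exp_pos (-li * t)
  have h1 : (0:ℝ) < 1 - ρi := by linarith [hρ.2]
  unfold rhoFun; nlinarith

lemma rhoFun_le_one {ρi li t : ℝ} (hρ : ρi ∈ Ioo (0:ℝ) 1) (hl : 0 < li) (ht : 0 ≤ t) :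
    rhoFun ρi li t ≤ 1 := by
  have h1 : (0:ℝ) < 1 - ρi := by linarith [hρ.2]
  have h2 : Real.exp (-li * t) ≤ 1 := Real.exp_le_one_iff.mpr (by nlinarith)
  unfold rhoFun; nlinarith

lemma rhoFun_hasDerivAt (ρi li : ℝ) (t : ℝ) :
    HasDerivAt (fun s => rhoFun ρi li s) (-(li * ((1 - ρi) * Real.exp (-li * t)))) t := by
  have h : HasDerivAt (fun s : ℝ => Real.exp (-li * s)) (-li * Real.exp (-li * t)) t := by
    simpa [mul_comm] using ((hasDerivAt_id t).const_mul (-li)).exp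
  have := (h.const_mul (1 - ρi)).add_const ρi
  refine this.congr_deriv ?_
  ring

lemma rhoFun_continuous (ρi li : ℝ) : Continuous (fun s => rhoFun ρi li s) := by
  unfold rhoFun; fun_prop

-- matrix identity
lemma g_mulVec_controller {n m : ℕ} (g : Matrix (Fin n) (Fin m) ℝ)
    (hpd : (g * gᵀ).PosDef) (v : Fin n → ℝ) :
    g.mulVec (-((gᵀ).mulVec (((g * gᵀ)⁻¹).mulVec v))) = -v := by
  rw [Matrix.mulVec_neg, Matrix.mulVec_mulVec, Matrix.mulVec_mulVec,
    Matrix.mul_nonsing_inv _ (isUnit_iff_ne_zero.mpr hpd.det_pos.ne'), Matrix.one_mulVec]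

set_option maxHeartbeats 1000000 in
lemma funnel_invariant {n m : ℕ}
    (f : (Fin n → ℝ) → (Fin n → ℝ))
    (g : (Fin n → ℝ) → Matrix (Fin n) (Fin m) ℝ)
    (hfc : Continuous f)
    (hpd : ∀ y, (g y * (g y)ᵀ).PosDef)
    (Xlow Xhigh η l ρinf : Fin n → ℝ)
    (hX : ∀ i, Xlow i < η i ∧ η i < Xhigh i)
    (hl : ∀ i, 0 < l i)
    (hρinf : ∀ i, ρinf i ∈ Set.Ioo (0 : ℝ) 1)
    (k : ℝ) (hk : 0 < k)
    (x : ℝ → Fin n → ℝ)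
    (hxc : ContinuousOn x (Set.Ici 0))
    (hx0 : ∀ i, rhoL η Xlow l ρinf 0 i < x 0 i ∧ x 0 i < rhoU η Xhigh l ρinf 0 i)
    (hode : ∀ t ∈ Set.Ici (0 : ℝ),
      (∀ s ∈ Set.Icc (0 : ℝ) t, ∀ i,
        rhoL η Xlow l ρinf s i < x s i ∧ x s i < rhoU η Xhigh l ρinf s i) →
      HasDerivAt x
        (f (x t) + (g (x t)).mulVec
          (funnelController k g (rhoL η Xlow l ρinf) (rhoU η Xhigh l ρinf)
            (rhoL' η Xlow l ρinf) (rhoU' η Xhigh l ρinf) (x t) t)) t) :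
    ∀ t ∈ Set.Ici (0:ℝ), ∀ i,
      rhoL η Xlow l ρinf t i < x t i ∧ x t i < rhoU η Xhigh l ρinf t i := by
  have hcl : ∀ i, 0 < η i - Xlow i := fun i => by linarith [(hX i).1]
  have hcu : ∀ i, 0 < Xhigh i - η i := fun i => by linarith [(hX i).2]
  have hρpos : ∀ (i) (t : ℝ), 0 < rhoFun (ρinf i) (l i) t :=
    fun i t => lt_trans (hρinf i).1 (rhoFun_gt (hρinf i) t)
  have hρle : ∀ (i) (t : ℝ), 0 ≤ t → rhoFun (ρinf i) (l i) t ≤ 1 :=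
    fun i t ht => rhoFun_le_one (hρinf i) (hl i) ht
  have hdpos : ∀ (t : ℝ) (i), 0 < rhoU η Xhigh l ρinf t i - rhoL η Xlow l ρinf t i := by
    intro t i
    have h1 := hρpos i t
    have h2 := hcl i; have h3 := hcu i
    unfold rhoU rhoL; nlinarith
  have hdle : ∀ (t : ℝ) (i), 0 ≤ t →
      rhoU η Xhigh l ρinf t i - rhoL η Xlow l ρinf t i ≤ Xhigh i - Xlow i := by
    intro t i ht
    have h1 := hρle i t ht
    have h2 := hcl i; have h3 := hcu i
    unfold rhoU rhoL; nlinarith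
  have hLX : ∀ (t : ℝ) (i), 0 ≤ t → Xlow i ≤ rhoL η Xlow l ρinf t i := by
    intro t i ht
    have h1 := hρle i t ht; have h2 := hρpos i t; have h3 := hcl i
    unfold rhoL; nlinarith
  have hUX : ∀ (t : ℝ) (i), 0 ≤ t → rhoU η Xhigh l ρinf t i ≤ Xhigh i := by
    intro t i ht
    have h1 := hρle i t ht; have h2 := hρpos i t; have h3 := hcu i
    unfold rhoU; nlinarith
  have hLcont : ∀ i, Continuous (fun t => rhoL η Xlow l ρinf t i) := by
    intro i; unfold rhoL rhoFun; fun_prop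
  have hUcont : ∀ i, Continuous (fun t => rhoU η Xhigh l ρinf t i) := by
    intro i; unfold rhoU rhoFun; fun_prop
  have hLd : ∀ (i) (t : ℝ), HasDerivAt (fun s => rhoL η Xlow l ρinf s i)
      (rhoL' η Xlow l ρinf t i) t := by
    intro i t
    have := ((rhoFun_hasDerivAt (ρinf i) (l i) t).const_mul (η i - Xlow i)).const_sub (η i)
    refine this.congr_deriv ?_
    unfold rhoL'; ring
  have hUd : ∀ (i) (t : ℝ), HasDerivAt (fun s => rhoU η Xhigh l ρinf s i)
      (rhoU' η Xhigh l ρinf t i) t := by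
    intro i t
    have := ((rhoFun_hasDerivAt (ρinf i) (l i) t).const_mul (Xhigh i - η i)).const_add (η i)
    refine this.congr_deriv ?_
    unfold rhoU'; ring
  -- contradiction setup
  by_contra hcon
  push_neg at hcon
  set Cset : Set ℝ :=
    {t | 0 ≤ t ∧ ∃ i, x t i ≤ rhoL η Xlow l ρinf t i ∨ rhoU η Xhigh l ρinf t i ≤ x t i}
    with hCdef
  have hCne : Cset.Nonempty := by
    obtain ⟨t, ht, i, hi⟩ := hcon
    refine ⟨t, ht, i, ?_⟩
    by_cases hL : rhoL η Xlow l ρinf t i < x t i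
    · exact Or.inr (hi hL)
    · exact Or.inl (le_of_not_gt hL)
  have hCclosed : IsClosed Cset := by
    have : Cset = ⋃ i, ((Set.Ici 0 ∩ (fun t => x t i - rhoL η Xlow l ρinf t i) ⁻¹' Set.Iic 0)
        ∪ (Set.Ici 0 ∩ (fun t => rhoU η Xhigh l ρinf t i - x t i) ⁻¹' Set.Iic 0)) := by
      ext t
      simp only [hCdef, Set.mem_setOf_eq, Set.mem_iUnion, Set.mem_union, Set.mem_inter_iff,
        Set.mem_preimage, Set.mem_Iic, Set.mem_Ici, sub_nonpos]
      constructor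
      · rintro ⟨ht, i, hi | hi⟩
        · exact ⟨i, Or.inl ⟨ht, hi⟩⟩
        · exact ⟨i, Or.inr ⟨ht, hi⟩⟩
      · rintro ⟨i, ⟨ht, hi⟩ | ⟨ht, hi⟩⟩
        · exact ⟨ht, i, Or.inl hi⟩
        · exact ⟨ht, i, Or.inr hi⟩
    rw [this]
    apply isClosed_iUnion_of_finite
    intro i
    have hxi : ContinuousOn (fun t => x t i) (Set.Ici 0) :=
      (continuous_apply i).comp_continuousOn hxc
    exact ((hxi.sub (hLcont i).continuousOn).preimage_isClosed_of_isClosed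
        isClosed_Ici isClosed_Iic).union
      (((hUcont i).continuousOn.sub hxi).preimage_isClosed_of_isClosed
        isClosed_Ici isClosed_Iic)
  have hbdd : BddBelow Cset := ⟨0, fun y hy => hy.1⟩
  have htC : sInf Cset ∈ Cset := hCclosed.csInf_mem hCne hbdd
  set tstar := sInf Cset with htsdef
  have hts0 : 0 < tstar := by
    rcases lt_or_eq_of_le htC.1 with h' | h'
    · exact h'
    · exfalso
      obtain ⟨i, hi⟩ := htC.2
      rcases hi with hi | hi <;> rw [← h'] at hi
      · exact absurd hi (not_le.mpr (hx0 i).1)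
      · exact absurd hi (not_le.mpr (hx0 i).2)
  have hIns : ∀ s ∈ Set.Ico (0:ℝ) tstar, ∀ i,
      rhoL η Xlow l ρinf s i < x s i ∧ x s i < rhoU η Xhigh l ρinf s i := by
    intro s hs i
    by_contra hc
    push_neg at hc
    have hsC : s ∈ Cset := by
      refine ⟨hs.1, i, ?_⟩
      by_cases hL : rhoL η Xlow l ρinf s i < x s i
      · exact Or.inr (hc hL)
      · exact Or.inl (le_of_not_gt hL)
    exact absurd (csInf_le hbdd hsC) (not_le.mpr hs.2)
  have hode' : ∀ t ∈ Set.Ico (0:ℝ) tstar, HasDerivAt x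
      (f (x t) + (g (x t)).mulVec
        (funnelController k g (rhoL η Xlow l ρinf) (rhoU η Xhigh l ρinf)
          (rhoL' η Xlow l ρinf) (rhoU' η Xhigh l ρinf) (x t) t)) t :=
    fun t ht => hode t ht.1 (fun s hs i => hIns s ⟨hs.1, lt_of_le_of_lt hs.2 ht.2⟩ i)
  -- compact bound on f
  obtain ⟨Mf, hMf⟩ : ∃ C, ∀ y ∈ Set.univ.pi (fun i => Set.Icc (Xlow i) (Xhigh i)), ‖f y‖ ≤ C :=
    (isCompact_univ_pi fun i => isCompact_Icc).exists_bound_of_continuousOn hfc.continuousOn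
  have hηK : (fun i => η i) ∈ Set.univ.pi (fun i => Set.Icc (Xlow i) (Xhigh i)) := by
    intro i _; exact ⟨(hX i).1.le, (hX i).2.le⟩
  have hMf0 : 0 ≤ Mf := le_trans (norm_nonneg _) (hMf _ hηK)
  have hxK : ∀ s ∈ Set.Ico (0:ℝ) tstar, ∀ j, |f (x s) j| ≤ Mf := by
    intro s hs j
    have hxm : x s ∈ Set.univ.pi (fun i => Set.Icc (Xlow i) (Xhigh i)) := by
      intro i _
      obtain ⟨h1, h2⟩ := hIns s hs i
      exact ⟨le_trans (hLX s i hs.1) h1.le, le_trans h2.le (hUX s i hs.1)⟩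
    calc |f (x s) j| = ‖f (x s) j‖ := (Real.norm_eq_abs _).symm
      _ ≤ ‖f (x s)‖ := norm_le_pi_norm _ j
      _ ≤ Mf := hMf _ hxm
  -- pick the coordinate that touches the boundary at tstar
  obtain ⟨i, hbi⟩ := htC.2
  -- constants
  obtain ⟨D0, hD0def⟩ : ∃ D0, D0 = Xhigh i - Xlow i := ⟨_, rfl⟩
  have hD0 : 0 < D0 := by rw [hD0def]; have := hcl i; have := hcu i; linarith
  obtain ⟨ximin, hximindef⟩ : ∃ xm, xm = 4 / D0 := ⟨_, rfl⟩
  have hximin : 0 < ximin := by rw [hximindef]; positivity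
  obtain ⟨Ms, hMsdef⟩ : ∃ Ms, Ms = D0 * l i * (1 - ρinf i) := ⟨_, rfl⟩
  have hMs0 : 0 ≤ Ms := by
    rw [hMsdef]
    exact le_of_lt (mul_pos (mul_pos hD0 (hl i)) (by linarith [(hρinf i).2]))
  obtain ⟨M, hMdef⟩ : ∃ M, M = 2 * Mf + Ms := ⟨_, rfl⟩
  have hM0 : 0 ≤ M := by rw [hMdef]; linarith
  obtain ⟨eps, hepsdef⟩ : ∃ eps : ℝ → ℝ,
      eps = fun s => terr (rhoL η Xlow l ρinf s i) (rhoU η Xhigh l ρinf s i) (x s i) := ⟨_, rfl⟩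
  obtain ⟨Ri, hRidef⟩ : ∃ Ri, Ri = max |eps 0| (M / (2 * k * ximin)) + 1 := ⟨_, rfl⟩
  have hRi1 : 1 ≤ Ri := by
    have : (0:ℝ) ≤ max |eps 0| (M / (2 * k * ximin)) :=
      le_trans (abs_nonneg _) (le_max_left _ _)
    rw [hRidef]; linarith
  have hRiM : M / (2 * k * ximin) + 1 ≤ Ri := by
    rw [hRidef]; have := le_max_right |eps 0| (M / (2 * k * ximin)); linarith
  -- bound on the sum of funnel derivatives
  have hsu : ∀ t : ℝ, 0 ≤ t →
      |rhoU' η Xhigh l ρinf t i + rhoL' η Xlow l ρinf t i| ≤ Ms := by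
    intro t ht
    have he1 : 0 < Real.exp (-(l i) * t) := Real.exp_pos _
    have he2 : Real.exp (-(l i) * t) ≤ 1 := by
      rw [Real.exp_le_one_iff]; nlinarith [hl i]
    have h2 := hcl i; have h3 := hcu i; have h4 := (hρinf i).2; have h5 := hl i
    set q := l i * ((1 - ρinf i) * Real.exp (-(l i) * t)) with hqdef
    have hq0 : 0 ≤ q := by
      unfold q
      exact mul_nonneg h5.le (mul_nonneg (by linarith) he1.le)
    have hq1 : q ≤ l i * (1 - ρinf i) := by
      unfold q; nlinarith
    have hcld : 0 ≤ (η i - Xlow i) * (l i * (1 - ρinf i) - q) := by nlinarith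
    have hcud : 0 ≤ (Xhigh i - η i) * (l i * (1 - ρinf i) + q) := by nlinarith
    rw [abs_le, hMsdef, hD0def]
    unfold rhoU' rhoL'
    rw [← hqdef]
    constructor
    · nlinarith
    · nlinarith
  -- key derivative estimate
  have hkey : ∀ t ∈ Set.Ico (0:ℝ) tstar, ∃ v,
      HasDerivAt (fun s => eps s ^ 2) v t ∧ (Ri ^ 2 ≤ eps t ^ 2 → v < 0) := by
    intro t ht
    simp only [hepsdef]
    obtain ⟨hx1, hx2⟩ := hIns t ht i
    -- the closed-loop vector field, simplified
    have hcontrol : (g (x t)).mulVec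
        (funnelController k g (rhoL η Xlow l ρinf) (rhoU η Xhigh l ρinf)
          (rhoL' η Xlow l ρinf) (rhoU' η Xhigh l ρinf) (x t) t) =
        -(fun j => k * xhat (rhoL η Xlow l ρinf t j) (rhoU η Xhigh l ρinf t j) (x t j) *
            terr (rhoL η Xlow l ρinf t j) (rhoU η Xhigh l ρinf t j) (x t j)
          - 1 / 2 * (rhoU' η Xhigh l ρinf t j - rhoL' η Xlow l ρinf t j) *
            nerr (rhoL η Xlow l ρinf t j) (rhoU η Xhigh l ρinf t j) (x t j)) := by
      unfold funnelController
      exact g_mulVec_controller (g (x t)) (hpd (x t)) _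
    have hxi : HasDerivAt (fun s => x s i)
        (f (x t) i - (k * xhat (rhoL η Xlow l ρinf t i) (rhoU η Xhigh l ρinf t i) (x t i) *
            terr (rhoL η Xlow l ρinf t i) (rhoU η Xhigh l ρinf t i) (x t i)
          - 1 / 2 * (rhoU' η Xhigh l ρinf t i - rhoL' η Xlow l ρinf t i) *
            nerr (rhoL η Xlow l ρinf t i) (rhoU η Xhigh l ρinf t i) (x t i))) t := by
      have := (hasDerivAt_pi.mp (hode' t ht)) i
      rw [hcontrol] at this
      simpa [sub_eq_add_neg] using this
    have hchain := eps_sq_hasDerivAt (hLd i t) (hUd i t) hxi hx1 hx2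
    refine ⟨_, hchain, ?_⟩
    intro hRe
    -- notation
    set Lt := rhoL η Xlow l ρinf t i
    set Ut := rhoU η Xhigh l ρinf t i
    set Lt' := rhoL' η Xlow l ρinf t i
    set Ut' := rhoU' η Xhigh l ρinf t i
    set Et := nerr Lt Ut (x t i) with hEtdef
    set epst := terr Lt Ut (x t i) with hepstdef
    set xit := xhat Lt Ut (x t i) with hxitdef
    obtain ⟨hEl, hEu⟩ := nerr_mem_Ioo hx1 hx2
    have hdt : 0 < Ut - Lt := hdpos t i
    have hdtle : Ut - Lt ≤ D0 := by rw [hD0def]; exact hdle t i ht.1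
    have hEsq : Et ^ 2 < 1 := by nlinarith
    have hxitval : xit = 4 / ((Ut - Lt) * (1 - Et ^ 2)) := rfl
    have hprod : 0 < (Ut - Lt) * (1 - Et ^ 2) := mul_pos hdt (by nlinarith)
    have hxitpos : 0 < xit := by rw [hxitval]; exact div_pos (by norm_num) hprod
    have hxitge : ximin ≤ xit := by
      rw [hxitval, hximindef]
      apply div_le_div_of_nonneg_left (by norm_num) hprod
      nlinarith
    -- simplify the derivative value
    have hval : 2 * epst * (xit / 2 *
        (2 * (f (x t) i - (k * xit * epst - 1 / 2 * (Ut' - Lt') * Et)) - (Ut' + Lt')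
          - Et * (Ut' - Lt'))) =
        xit * (epst * (2 * f (x t) i - (Ut' + Lt')) - 2 * k * xit * epst ^ 2) := by
      ring
    rw [hval]
    -- bounds
    have hfb : |f (x t) i| ≤ Mf := hxK t ht i
    have hsub : |Ut' + Lt'| ≤ Ms := hsu t ht.1
    have hepsb : Ri ≤ |epst| := by
      by_contra hcb
      push_neg at hcb
      nlinarith [abs_nonneg epst, sq_abs epst]
    have hA1 : epst * (2 * f (x t) i - (Ut' + Lt')) ≤ |epst| * M := by
      calc epst * (2 * f (x t) i - (Ut' + Lt')) ≤ |epst * (2 * f (x t) i - (Ut' + Lt'))| :=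
            le_abs_self _
        _ = |epst| * |2 * f (x t) i - (Ut' + Lt')| := abs_mul _ _
        _ ≤ |epst| * M := by
            apply mul_le_mul_of_nonneg_left _ (abs_nonneg _)
            rw [hMdef]
            calc |2 * f (x t) i - (Ut' + Lt')| ≤ |2 * f (x t) i| + |Ut' + Lt'| := abs_sub _ _
              _ ≤ 2 * Mf + Ms := by
                  rw [abs_mul]
                  have : |(2:ℝ)| = 2 := by norm_num
                  rw [this]
                  linarith
    have hA2 : 2 * k * ximin * epst ^ 2 ≤ 2 * k * xit * epst ^ 2 := by
      have h := mul_le_mul_of_nonneg_left hxitge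
        (mul_nonneg (by positivity : (0:ℝ) ≤ 2 * k) (sq_nonneg epst))
      linarith [h]
    have hfinal : epst * (2 * f (x t) i - (Ut' + Lt')) - 2 * k * xit * epst ^ 2 < 0 := by
      have hsq : epst ^ 2 = |epst| * |epst| := by rw [← abs_mul, abs_mul_self]; ring
      have hRile : M / (2 * k * ximin) + 1 ≤ |epst| := le_trans hRiM hepsb
      have hMle : M ≤ (|epst| - 1) * (2 * k * ximin) := by
        rw [div_add' _ _ _ (by positivity), div_le_iff₀ (by positivity)] at hRile
        nlinarith
      have e1 : 1 ≤ |epst| := le_trans hRi1 hepsb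
      have e2 : |epst| * M ≤ |epst| * ((|epst| - 1) * (2 * k * ximin)) :=
        mul_le_mul_of_nonneg_left hMle (abs_nonneg epst)
      have e3 : 0 < 2 * k * ximin := by positivity
      have h1 : |epst| * M - 2 * k * ximin * epst ^ 2 < 0 := by
        rw [hsq]; nlinarith [e1, e2, e3]
      linarith [hA1, hA2, h1]
    exact mul_neg_of_pos_of_neg hxitpos hfinal
  -- barrier: eps² < Ri² on [0, tstar)
  have heps0 : eps 0 ^ 2 < Ri ^ 2 := by
    have h1 : |eps 0| ≤ Ri - 1 := by
      rw [hRidef]; simp only [add_sub_cancel_right]; exact le_max_left _ _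
    nlinarith [abs_nonneg (eps 0), sq_abs (eps 0), hRi1]
  have hbar : ∀ s ∈ Set.Ico (0:ℝ) tstar, eps s ^ 2 < Ri ^ 2 := by
    intro T hT
    have hTt : Set.Icc (0:ℝ) T ⊆ Set.Ico (0:ℝ) tstar :=
      fun u hu => ⟨hu.1, lt_of_le_of_lt hu.2 hT.2⟩
    have hIccIci : Set.Icc (0:ℝ) T ⊆ Set.Ici 0 := fun u hu => hu.1
    have hconts : ContinuousOn (fun s => eps s ^ 2) (Set.Icc (0:ℝ) T) := by
      rw [hepsdef]
      exact (terr_continuousOn (hLcont i).continuousOn (hUcont i).continuousOn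
        ((continuous_apply i).comp_continuousOn (hxc.mono hIccIci))
        (fun s hs => hIns s (hTt hs) i)).pow 2
    exact barrier_lemma hconts heps0 hT.1
      (fun u hu hR => by
        obtain ⟨v, h1, h2⟩ := hkey u (hTt hu)
        exact ⟨v, h1, h2 hR⟩) T ⟨hT.1, le_refl T⟩
  -- bound the normalized error away from ±1
  obtain ⟨B, hBdef⟩ : ∃ B, B = (Real.exp Ri - 1) / (Real.exp Ri + 1) := ⟨_, rfl⟩
  have hc0 : (0:ℝ) < Real.exp Ri := Real.exp_pos _
  have hBlt : B < 1 := by rw [hBdef, div_lt_one (by positivity)]; linarith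
  have hEb : ∀ s ∈ Set.Ico (0:ℝ) tstar,
      nerr (rhoL η Xlow l ρinf s i) (rhoU η Xhigh l ρinf s i) (x s i) ≤ B ∧
      -B ≤ nerr (rhoL η Xlow l ρinf s i) (rhoU η Xhigh l ρinf s i) (x s i) := by
    intro s hs
    obtain ⟨hx1, hx2⟩ := hIns s hs i
    obtain ⟨hEl, hEu⟩ := nerr_mem_Ioo hx1 hx2
    have heb := hbar s hs
    have heps1 : eps s < Ri := by nlinarith [hRi1, le_abs_self (eps s), sq_abs (eps s)]
    have heps2 : -Ri < eps s := by nlinarith [hRi1, neg_abs_le (eps s), sq_abs (eps s)]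
    rw [hepsdef] at heps1 heps2
    simp only [terr] at heps1 heps2
    set E := nerr (rhoL η Xlow l ρinf s i) (rhoU η Xhigh l ρinf s i) (x s i) with hEdef
    have hQpos : 0 < (1 + E) / (1 - E) := div_pos (by linarith) (by linarith)
    have hlt : 1 + E < Real.exp Ri * (1 - E) :=
      (div_lt_iff₀ (by linarith)).mp ((Real.log_lt_iff_lt_exp hQpos).mp heps1)
    have hgt' : Real.exp (-Ri) * (1 - E) < 1 + E := by
      have := (Real.lt_log_iff_exp_lt hQpos).mp heps2
      exact (lt_div_iff₀ (by linarith)).mp this |>.trans_le (le_refl _)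
    have hgt : 1 - E < Real.exp Ri * (1 + E) := by
      have h2 := mul_lt_mul_of_pos_left hgt' hc0
      rw [← mul_assoc, Real.exp_neg, mul_inv_cancel₀ hc0.ne', one_mul] at h2
      exact h2
    constructor
    · rw [hBdef, le_div_iff₀ (by positivity)]; nlinarith
    · rw [hBdef, neg_le, le_div_iff₀ (by positivity)]; nlinarith
  -- contradiction at tstar
  have hIccIci' : Set.Icc (0:ℝ) tstar ⊆ Set.Ici 0 := fun u hu => hu.1
  have hxci : ContinuousOn (fun s => x s i) (Set.Icc (0:ℝ) tstar) :=
    (continuous_apply i).comp_continuousOn (hxc.mono hIccIci')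
  rcases hbi with hlow | hhigh
  · -- x tstar i ≤ L tstar i
    have hGnn : ∀ s ∈ Set.Ico (0:ℝ) tstar, 0 ≤ x s i - rhoL η Xlow l ρinf s i -
        (1 - B) * (rhoU η Xhigh l ρinf s i - rhoL η Xlow l ρinf s i) / 2 := by
      intro s hs
      obtain ⟨hx1, hx2⟩ := hIns s hs i
      have hd := hdpos s i
      have hEb2 := (hEb s hs).2
      have hid := lower_identity (L := rhoL η Xlow l ρinf s i)
        (U := rhoU η Xhigh l ρinf s i) (z := x s i) hd.ne'
      rw [hid]
      have hpr : 0 ≤ (nerr (rhoL η Xlow l ρinf s i) (rhoU η Xhigh l ρinf s i) (x s i) + B) *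
          (rhoU η Xhigh l ρinf s i - rhoL η Xlow l ρinf s i) :=
        mul_nonneg (by linarith [hEb2]) hd.le
      linarith [hpr]
    have hGc : ContinuousOn (fun s => x s i - rhoL η Xlow l ρinf s i -
        (1 - B) * (rhoU η Xhigh l ρinf s i - rhoL η Xlow l ρinf s i) / 2)
        (Set.Icc (0:ℝ) tstar) := by
      apply ContinuousOn.sub (hxci.sub (hLcont i).continuousOn)
      exact ((continuousOn_const.mul (((hUcont i).continuousOn.sub
        (hLcont i).continuousOn))).div_const 2)
    have h0 := nonneg_at_right_endpoint hts0 hGc hGnn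
    have hd := hdpos tstar i
    have hpr : 0 < (1 - B) * (rhoU η Xhigh l ρinf tstar i - rhoL η Xlow l ρinf tstar i) :=
      mul_pos (by linarith) hd
    linarith [h0, hlow, hpr]
  · -- rhoU tstar i ≤ x tstar i
    have hGnn : ∀ s ∈ Set.Ico (0:ℝ) tstar, 0 ≤ rhoU η Xhigh l ρinf s i - x s i -
        (1 - B) * (rhoU η Xhigh l ρinf s i - rhoL η Xlow l ρinf s i) / 2 := by
      intro s hs
      obtain ⟨hx1, hx2⟩ := hIns s hs i
      have hd := hdpos s i
      have hEb1 := (hEb s hs).1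
      have hid := upper_identity (L := rhoL η Xlow l ρinf s i)
        (U := rhoU η Xhigh l ρinf s i) (z := x s i) hd.ne'
      rw [hid]
      have hpr : 0 ≤ (B - nerr (rhoL η Xlow l ρinf s i) (rhoU η Xhigh l ρinf s i) (x s i)) *
          (rhoU η Xhigh l ρinf s i - rhoL η Xlow l ρinf s i) :=
        mul_nonneg (by linarith [hEb1]) hd.le
      linarith [hpr]
    have hGc : ContinuousOn (fun s => rhoU η Xhigh l ρinf s i - x s i -
        (1 - B) * (rhoU η Xhigh l ρinf s i - rhoL η Xlow l ρinf s i) / 2)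
        (Set.Icc (0:ℝ) tstar) := by
      apply ContinuousOn.sub ((hUcont i).continuousOn.sub hxci)
      exact ((continuousOn_const.mul (((hUcont i).continuousOn.sub
        (hLcont i).continuousOn))).div_const 2)
    have h0 := nonneg_at_right_endpoint hts0 hGc hGnn
    have hd := hdpos tstar i
    have hpr : 0 < (1 - B) * (rhoU η Xhigh l ρinf tstar i - rhoL η Xlow l ρinf tstar i) :=
      mul_pos (by linarith) hd
    linarith [h0, hhigh, hpr]


lemma rhoFun_tendsto {ρi li : ℝ} (hl : 0 < li) :
    Filter.Tendsto (fun t => rhoFun ρi li t) Filter.atTop (nhds ρi) := by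
  have h2 : Filter.Tendsto (fun t : ℝ => -li * t) Filter.atTop Filter.atBot :=
    (tendsto_const_mul_atBot_of_neg (by linarith)).mpr tendsto_id
  have h3 := (Real.tendsto_exp_atBot.comp h2).const_mul (1 - ρi)
  have h4 := h3.add_const ρi
  simpa [rhoFun, Function.comp] using h4

/-- Theorem 1 (controller for reachability): with the funnel controller built from the
reachability funnel, every admissible closed-loop solution (i) stays strictly inside the
funnel and the state-space box for all time, and (ii) reaches in finite time any target set
containing the rectangle `∏ᵢ [ηᵢ − c̲ᵢ ρ'ᵢ, ηᵢ + c̄ᵢ ρ'ᵢ]` with `ρ'ᵢ > ρ_{i,∞}`. -/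
theorem reachability_controller {n m : ℕ}
    (f : (Fin n → ℝ) → (Fin n → ℝ))
    (g : (Fin n → ℝ) → Matrix (Fin n) (Fin m) ℝ)
    (hf : LocallyLipschitz f)
    (hg : LocallyLipschitz (fun y => fun i j => g y i j))
    (hpd : ∀ y, (g y * (g y)ᵀ).PosDef)
    (Xlow Xhigh η l ρinf : Fin n → ℝ)
    (hX : ∀ i, Xlow i < η i ∧ η i < Xhigh i)
    (hl : ∀ i, 0 < l i)
    (hρinf : ∀ i, ρinf i ∈ Ioo (0 : ℝ) 1)
    (k : ℝ) (hk : 0 < k)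
    (x : ℝ → Fin n → ℝ)
    (hxc : ContinuousOn x (Ici 0))
    (hx0 : ∀ i, rhoL η Xlow l ρinf 0 i < x 0 i ∧ x 0 i < rhoU η Xhigh l ρinf 0 i)
    (hode : ∀ t ∈ Ici (0 : ℝ),
      (∀ s ∈ Icc (0 : ℝ) t, ∀ i,
        rhoL η Xlow l ρinf s i < x s i ∧ x s i < rhoU η Xhigh l ρinf s i) →
      HasDerivAt x
        (f (x t) + (g (x t)).mulVec
          (funnelController k g (rhoL η Xlow l ρinf) (rhoU η Xhigh l ρinf)
            (rhoL' η Xlow l ρinf) (rhoU' η Xhigh l ρinf) (x t) t)) t) :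
    (∀ t ∈ Ici (0 : ℝ), ∀ i,
      rhoL η Xlow l ρinf t i < x t i ∧ x t i < rhoU η Xhigh l ρinf t i ∧
        Xlow i < x t i ∧ x t i < Xhigh i) ∧
    (∀ Tset : Set (Fin n → ℝ), ∀ ρ' : Fin n → ℝ, (∀ i, ρinf i < ρ' i) →
      (Set.univ.pi fun i =>
        Icc (η i - (η i - Xlow i) * ρ' i) (η i + (Xhigh i - η i) * ρ' i)) ⊆ Tset →
      ∃ t ≥ (0 : ℝ), x t ∈ Tset) := by
  have hinv := funnel_invariant f g hf.continuous hpd Xlow Xhigh η l ρinf hX hl hρinf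
    k hk x hxc hx0 hode
  have hcl : ∀ i, 0 < η i - Xlow i := fun i => by linarith [(hX i).1]
  have hcu : ∀ i, 0 < Xhigh i - η i := fun i => by linarith [(hX i).2]
  have hρpos : ∀ (i) (t : ℝ), 0 < rhoFun (ρinf i) (l i) t :=
    fun i t => lt_trans (hρinf i).1 (rhoFun_gt (hρinf i) t)
  have hρle : ∀ (i) (t : ℝ), 0 ≤ t → rhoFun (ρinf i) (l i) t ≤ 1 :=
    fun i t ht => rhoFun_le_one (hρinf i) (hl i) ht
  constructor
  · intro t ht i
    obtain ⟨h1, h2⟩ := hinv t ht i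
    refine ⟨h1, h2, ?_, ?_⟩
    · have hLX : Xlow i ≤ rhoL η Xlow l ρinf t i := by
        have ha := hρle i t ht; have hb := hρpos i t; have hc := hcl i
        unfold rhoL; nlinarith
      linarith
    · have hUX : rhoU η Xhigh l ρinf t i ≤ Xhigh i := by
        have ha := hρle i t ht; have hb := hρpos i t; have hc := hcu i
        unfold rhoU; nlinarith
      linarith
  · intro Tset ρ' hρ' hsub
    have hall : ∀ᶠ t in Filter.atTop, ∀ i, rhoFun (ρinf i) (l i) t ≤ ρ' i :=
      Filter.eventually_all.mpr fun i =>
        ((rhoFun_tendsto (hl i)).eventually_lt_const (hρ' i)).mono fun _ h => h.le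
    obtain ⟨t, hts, ht0⟩ := (hall.and (Filter.eventually_ge_atTop (0:ℝ))).exists
    refine ⟨t, ht0, hsub ?_⟩
    intro i _
    obtain ⟨h1, h2⟩ := hinv t ht0 i
    have hρi := hts i
    have hc1 := hcl i; have hc2 := hcu i
    constructor
    · have : η i - (η i - Xlow i) * ρ' i ≤ rhoL η Xlow l ρinf t i := by
        unfold rhoL; nlinarith
      linarith
    · have : rhoU η Xhigh l ρinf t i ≤ η i + (Xhigh i - η i) * ρ' i := by
        unfold rhoU; nlinarith
      linarith
end
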